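/- Let G be a graph on vertex set [n] and z ∈ ℕ. Then the encoding map π_z(G) described below is a permutation of [2zn + |E(G)|] (i.e., it is a bijection). -/

import Mathlib

open scoped Classical

noncomputable section

/-- Number of right-neighbours of `v` (neighbours `u` with `v < u ≤ n`). -/
def degPlus (n : ℕ) (E : ℕ → ℕ → Prop) (v : ℕ) : ℕ :=
  ((Finset.Icc (v + 1) n).filter (fun u => E v u)).card

/-- Number of left-neighbours of `v` (neighbours `u` with `1 ≤ u < v`). -/
def degMinus (n : ℕ) (E : ℕ → ℕ → Prop) (v : ℕ) : ℕ :=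
  ((Finset.Icc 1 (v - 1)).filter (fun u => E v u)).card

/-- The number of edges of the graph with vertex set `[1, n]` and adjacency `E`. -/
def edgeCount (n : ℕ) (E : ℕ → ℕ → Prop) : ℕ :=
  (((Finset.Icc 1 n) ×ˢ (Finset.Icc 1 n)).filter (fun p => p.1 < p.2 ∧ E p.1 p.2)).card

/-- Starting position of the left separating run of `v`. -/
def pL (n z : ℕ) (E : ℕ → ℕ → Prop) (v : ℕ) : ℕ :=
  1 + ∑ w ∈ Finset.Ico 1 v, (2 * z + degPlus n E w)

/-- Starting position of the encoding entries of `v`. -/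
def pM (n z : ℕ) (E : ℕ → ℕ → Prop) (v : ℕ) : ℕ := pL n z E v + z

/-- Starting position of the right separating run of `v`. -/
def pR (n z : ℕ) (E : ℕ → ℕ → Prop) (v : ℕ) : ℕ := pM n z E v + degPlus n E v

/-- Starting (largest) value of the right separating run of `v`. -/
def qR (n z : ℕ) (E : ℕ → ℕ → Prop) (v : ℕ) : ℕ :=
  z + ∑ w ∈ Finset.Ico 1 v, (2 * z + degMinus n E w)

/-- Least value reserved for the encoding entries pointing to `v`. -/
def qM (n z : ℕ) (E : ℕ → ℕ → Prop) (v : ℕ) : ℕ := qR n z E v + 1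

/-- Starting (largest) value of the left separating run of `v`. -/
def qL (n z : ℕ) (E : ℕ → ℕ → Prop) (v : ℕ) : ℕ := qR n z E v + z + degMinus n E v

/-- `ℓ(v, u) = |{w < v : {w, u} ∈ E}|`. -/
def ellE (E : ℕ → ℕ → Prop) (v u : ℕ) : ℕ :=
  ((Finset.Ico 1 v).filter (fun w => E w u)).card

/-- The sorted list of right-neighbours of `v`. -/
def nbrList (n : ℕ) (E : ℕ → ℕ → Prop) (v : ℕ) : List ℕ :=
  Finset.sort ((Finset.Icc (v + 1) n).filter (fun u => E v u)) (· ≤ ·)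

/-- The encoding permutation `π_z(G)` of the paper, as a function on positions
(acting on `[1, 2zn + |E(G)|]`): for each vertex `v` (in order) it consists of a
decreasing run of length `z` starting with value `qL v`, then one encoding entry
`qM u + ℓ(v, u)` for each right-neighbour `u` of `v` in increasing order, then a
decreasing run of length `z` starting with value `qR v`. -/
def enc (n z : ℕ) (E : ℕ → ℕ → Prop) (i : ℕ) : ℕ :=
  if h1 : ∃ v, v ∈ Finset.Icc 1 n ∧ pL n z E v ≤ i ∧ i < pM n z E v then
    qL n z E h1.choose - (i - pL n z E h1.choose)
  else if h2 : ∃ v, v ∈ Finset.Icc 1 n ∧ pR n z E v ≤ i ∧ i < pR n z E v + z then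
    qR n z E h2.choose - (i - pR n z E h2.choose)
  else if h3 : ∃ v, v ∈ Finset.Icc 1 n ∧ pM n z E v ≤ i ∧ i < pR n z E v then
    (fun v => (fun u => qM n z E u + ellE E v u)
      ((nbrList n E v).getD (i - pM n z E v) 0)) h3.choose
  else 0

/-- `i` lies in the left or right separating run of the vertex `v`. -/
def inRunOf (n z : ℕ) (E : ℕ → ℕ → Prop) (v i : ℕ) : Prop :=
  (pL n z E v ≤ i ∧ i < pL n z E v + z) ∨ (pR n z E v ≤ i ∧ i < pR n z E v + z)

/-- `i` lies in some separating run. -/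
def inSepRun (n z : ℕ) (E : ℕ → ℕ → Prop) (i : ℕ) : Prop :=
  ∃ v, v ∈ Finset.Icc 1 n ∧ inRunOf n z E v i

/-- `σ`, a bijection of `[1, l]`, is a pattern of `π`, a bijection of `[1, m]`:
there is a strictly increasing `φ : [1, l] → [1, m]` with
`σ x < σ y ↔ π (φ x) < π (φ y)`. -/
def IsPatternOn (σ : ℕ → ℕ) (l : ℕ) (π : ℕ → ℕ) (m : ℕ) : Prop :=
  ∃ φ : ℕ → ℕ, Set.MapsTo φ (Set.Icc 1 l) (Set.Icc 1 m) ∧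
    StrictMonoOn φ (Set.Icc 1 l) ∧
    ∀ x ∈ Set.Icc 1 l, ∀ y ∈ Set.Icc 1 l, (σ x < σ y ↔ π (φ x) < π (φ y))

end

section EncBij

open Finset

variable (n z : ℕ) (E : ℕ → ℕ → Prop)

lemma pL_one : pL n z E 1 = 1 := by simp [pL]

lemma qR_one : qR n z E 1 = z := by simp [qR]

lemma pL_succ {v : ℕ} (hv : 1 ≤ v) :
    pL n z E (v + 1) = pL n z E v + (2 * z + degPlus n E v) := by
  unfold pL
  rw [Finset.sum_Ico_succ_top hv]
  ring

lemma qR_succ {v : ℕ} (hv : 1 ≤ v) :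
    qR n z E (v + 1) = qR n z E v + (2 * z + degMinus n E v) := by
  unfold qR
  rw [Finset.sum_Ico_succ_top hv]
  ring

lemma pL_mono : Monotone (pL n z E) := by
  intro a b hab
  unfold pL
  exact Nat.add_le_add_left
    (Finset.sum_le_sum_of_subset (Finset.Ico_subset_Ico le_rfl hab)) 1

lemma qR_mono : Monotone (qR n z E) := by
  intro a b hab
  unfold qR
  exact Nat.add_le_add_left
    (Finset.sum_le_sum_of_subset (Finset.Ico_subset_Ico le_rfl hab)) z

lemma z_le_qR (v : ℕ) : z ≤ qR n z E v := Nat.le_add_right _ _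

lemma sum_degPlus :
    ∑ v ∈ Finset.Ico 1 (n + 1), degPlus n E v = edgeCount n E := by
  rw [Finset.Ico_add_one_right_eq_Icc, edgeCount,
    Finset.card_eq_sum_card_fiberwise (f := Prod.fst) (t := Finset.Icc 1 n)
      (fun p hp => (Finset.mem_product.mp (Finset.mem_filter.mp hp).1).1)]
  refine Finset.sum_congr rfl fun v hv => ?_
  rw [Finset.mem_Icc] at hv
  rw [degPlus]
  symm
  refine Finset.card_bij' (fun p _ => p.2) (fun u _ => (v, u)) ?_ ?_ ?_ ?_
  · intro p hp
    simp only [Finset.mem_filter, Finset.mem_product, Finset.mem_Icc] at hp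
    simp only [Finset.mem_filter, Finset.mem_Icc]
    obtain ⟨⟨⟨_, hp2⟩, hlt, hE⟩, hfst⟩ := hp
    subst hfst
    exact ⟨⟨by omega, hp2.2⟩, hE⟩
  · intro u hu
    simp only [Finset.mem_filter, Finset.mem_Icc] at hu
    have h1u : 1 ≤ u := by omega
    have hvu : v < u := by omega
    show (v, u) ∈ _
    exact Finset.mem_filter.mpr ⟨Finset.mem_filter.mpr
      ⟨Finset.mem_product.mpr ⟨Finset.mem_Icc.mpr ⟨hv.1, hv.2⟩,
        Finset.mem_Icc.mpr ⟨h1u, hu.1.2⟩⟩, hvu, hu.2⟩, rfl⟩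
  · intro p hp
    simp only [Finset.mem_filter] at hp
    exact Prod.ext hp.2.symm rfl
  · intro u hu; rfl

lemma sum_degMinus (hsym : ∀ u v, E u v → E v u) :
    ∑ v ∈ Finset.Ico 1 (n + 1), degMinus n E v = edgeCount n E := by
  rw [Finset.Ico_add_one_right_eq_Icc, edgeCount,
    Finset.card_eq_sum_card_fiberwise (f := Prod.snd) (t := Finset.Icc 1 n)
      (fun p hp => (Finset.mem_product.mp (Finset.mem_filter.mp hp).1).2)]
  refine Finset.sum_congr rfl fun u hu => ?_
  rw [Finset.mem_Icc] at hu
  rw [degMinus]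
  symm
  refine Finset.card_bij' (fun p _ => p.1) (fun w _ => (w, u)) ?_ ?_ ?_ ?_
  · intro p hp
    simp only [Finset.mem_filter, Finset.mem_product, Finset.mem_Icc] at hp
    simp only [Finset.mem_filter, Finset.mem_Icc]
    obtain ⟨⟨⟨hp1, _⟩, hlt, hE⟩, hsnd⟩ := hp
    subst hsnd
    exact ⟨⟨hp1.1, by omega⟩, hsym _ _ hE⟩
  · intro w hw
    simp only [Finset.mem_filter, Finset.mem_Icc] at hw
    have hwu : w < u := by omega
    have hwn : w ≤ n := by omega
    show (w, u) ∈ _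
    exact Finset.mem_filter.mpr ⟨Finset.mem_filter.mpr
      ⟨Finset.mem_product.mpr ⟨Finset.mem_Icc.mpr ⟨hw.1.1, hwn⟩,
        Finset.mem_Icc.mpr ⟨hu.1, hu.2⟩⟩, hwu, hsym _ _ hw.2⟩, rfl⟩
  · intro p hp
    simp only [Finset.mem_filter] at hp
    exact Prod.ext rfl hp.2.symm
  · intro w hw; rfl

lemma pL_top : pL n z E (n + 1) = 2 * z * n + edgeCount n E + 1 := by
  unfold pL
  rw [Finset.sum_add_distrib, sum_degPlus, Finset.sum_const, Nat.card_Ico,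
    Nat.add_sub_cancel, smul_eq_mul]
  ring

lemma qR_top (hsym : ∀ u v, E u v → E v u) :
    qR n z E (n + 1) = z + (2 * z * n + edgeCount n E) := by
  unfold qR
  rw [Finset.sum_add_distrib, sum_degMinus n E hsym, Finset.sum_const, Nat.card_Ico,
    Nat.add_sub_cancel, smul_eq_mul]
  ring

lemma block_unique {v w i : ℕ} (hv : 1 ≤ v) (hw : 1 ≤ w)
    (h1 : pL n z E v ≤ i) (h2 : i < pR n z E v + z)
    (h3 : pL n z E w ≤ i) (h4 : i < pR n z E w + z) : v = w := by
  have hv' : pR n z E v + z = pL n z E (v + 1) := by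
    rw [pL_succ n z E hv]; unfold pR pM; ring
  have hw' : pR n z E w + z = pL n z E (w + 1) := by
    rw [pL_succ n z E hw]; unfold pR pM; ring
  by_contra hne
  rcases Nat.lt_or_ge v w with h | h
  · have := pL_mono n z E (show v + 1 ≤ w from h)
    omega
  · have hlt : w < v := lt_of_le_of_ne h (Ne.symm hne)
    have := pL_mono n z E (show w + 1 ≤ v from hlt)
    omega

lemma qblock_unique {v w y : ℕ} (hv : 1 ≤ v) (hw : 1 ≤ w)
    (h1 : qR n z E v < y) (h2 : y ≤ qR n z E (v + 1))
    (h3 : qR n z E w < y) (h4 : y ≤ qR n z E (w + 1)) : v = w := by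
  by_contra hne
  rcases Nat.lt_or_ge v w with h | h
  · have := qR_mono n z E (show v + 1 ≤ w from h)
    omega
  · have hlt : w < v := lt_of_le_of_ne h (Ne.symm hne)
    have := qR_mono n z E (show w + 1 ≤ v from hlt)
    omega

lemma pM_eq (v : ℕ) : pM n z E v = pL n z E v + z := rfl

lemma pR_eq (v : ℕ) : pR n z E v = pL n z E v + z + degPlus n E v := rfl

lemma enc_left {v j : ℕ} (hv : v ∈ Finset.Icc 1 n) (hj : j < z) :
    enc n z E (pL n z E v + j) = qL n z E v - j := by
  have hv1 : 1 ≤ v := (Finset.mem_Icc.mp hv).1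
  have ev1 := pM_eq n z E v
  have ev2 := pR_eq n z E v
  have h1 : ∃ w, w ∈ Finset.Icc 1 n ∧ pL n z E w ≤ pL n z E v + j ∧
      pL n z E v + j < pM n z E w :=
    ⟨v, hv, Nat.le_add_right _ _, by omega⟩
  rw [enc, dif_pos h1]
  obtain ⟨hw1, hw2, hw3⟩ := h1.choose_spec
  have ew1 := pM_eq n z E h1.choose
  have ew2 := pR_eq n z E h1.choose
  have hwv : h1.choose = v := by
    refine block_unique n z E (Finset.mem_Icc.mp hw1).1 hv1 hw2 ?_ ?_ ?_
    all_goals omega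
  rw [hwv]
  congr 1
  omega

lemma enc_right {v j : ℕ} (hv : v ∈ Finset.Icc 1 n) (hj : j < z) :
    enc n z E (pR n z E v + j) = qR n z E v - j := by
  have hv1 : 1 ≤ v := (Finset.mem_Icc.mp hv).1
  have ev1 := pM_eq n z E v
  have ev2 := pR_eq n z E v
  have hn1 : ¬ ∃ w, w ∈ Finset.Icc 1 n ∧ pL n z E w ≤ pR n z E v + j ∧
      pR n z E v + j < pM n z E w := by
    rintro ⟨w, hw, hw2, hw3⟩
    have ew1 := pM_eq n z E w
    have ew2 := pR_eq n z E w
    have hwv : w = v := by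
      refine block_unique n z E (Finset.mem_Icc.mp hw).1 hv1 hw2 ?_ ?_ ?_
      all_goals omega
    subst hwv
    omega
  have h2 : ∃ w, w ∈ Finset.Icc 1 n ∧ pR n z E w ≤ pR n z E v + j ∧
      pR n z E v + j < pR n z E w + z :=
    ⟨v, hv, Nat.le_add_right _ _, by omega⟩
  rw [enc, dif_neg hn1, dif_pos h2]
  obtain ⟨hw1, hw2, hw3⟩ := h2.choose_spec
  have ew1 := pM_eq n z E h2.choose
  have ew2 := pR_eq n z E h2.choose
  have hwv : h2.choose = v := by
    refine block_unique n z E (Finset.mem_Icc.mp hw1).1 hv1 ?_ hw3 ?_ ?_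
    all_goals omega
  rw [hwv]
  congr 1
  omega

lemma enc_mid {v j : ℕ} (hv : v ∈ Finset.Icc 1 n) (hj : j < degPlus n E v) :
    enc n z E (pM n z E v + j)
      = qM n z E ((nbrList n E v).getD j 0)
        + ellE E v ((nbrList n E v).getD j 0) := by
  have hv1 : 1 ≤ v := (Finset.mem_Icc.mp hv).1
  have ev1 := pM_eq n z E v
  have ev2 := pR_eq n z E v
  have hn1 : ¬ ∃ w, w ∈ Finset.Icc 1 n ∧ pL n z E w ≤ pM n z E v + j ∧
      pM n z E v + j < pM n z E w := by
    rintro ⟨w, hw, hw2, hw3⟩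
    have ew1 := pM_eq n z E w
    have ew2 := pR_eq n z E w
    have hwv : w = v := by
      refine block_unique n z E (Finset.mem_Icc.mp hw).1 hv1 hw2 ?_ ?_ ?_
      all_goals omega
    subst hwv
    omega
  have hn2 : ¬ ∃ w, w ∈ Finset.Icc 1 n ∧ pR n z E w ≤ pM n z E v + j ∧
      pM n z E v + j < pR n z E w + z := by
    rintro ⟨w, hw, hw2, hw3⟩
    have ew1 := pM_eq n z E w
    have ew2 := pR_eq n z E w
    have hwv : w = v := by
      refine block_unique n z E (Finset.mem_Icc.mp hw).1 hv1 ?_ hw3 ?_ ?_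
      all_goals omega
    subst hwv
    omega
  have h3 : ∃ w, w ∈ Finset.Icc 1 n ∧ pM n z E w ≤ pM n z E v + j ∧
      pM n z E v + j < pR n z E w :=
    ⟨v, hv, Nat.le_add_right _ _, by omega⟩
  rw [enc, dif_neg hn1, dif_neg hn2, dif_pos h3]
  obtain ⟨hw1, hw2, hw3⟩ := h3.choose_spec
  have ew1 := pM_eq n z E h3.choose
  have ew2 := pR_eq n z E h3.choose
  have hwv : h3.choose = v := by
    refine block_unique n z E (i := pM n z E v + j)
      (Finset.mem_Icc.mp hw1).1 hv1 ?_ ?_ ?_ ?_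
    all_goals omega
  rw [hwv]
  simp only [Nat.add_sub_cancel_left]

lemma exists_block (hn : 1 ≤ n) {i : ℕ} (h1 : 1 ≤ i)
    (h2 : i ≤ 2 * z * n + edgeCount n E) :
    ∃ v, 1 ≤ v ∧ v ≤ n ∧ pL n z E v ≤ i ∧ i < pL n z E (v + 1) := by
  have key : ∀ m, 1 ≤ m → i < pL n z E (m + 1) →
      ∃ v, 1 ≤ v ∧ v ≤ m ∧ pL n z E v ≤ i ∧ i < pL n z E (v + 1) := by
    intro m
    induction m with
    | zero => omega
    | succ m ih =>
      intro _ hlt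
      rcases Nat.lt_or_ge i (pL n z E (m + 1)) with h | h
      · rcases Nat.eq_zero_or_pos m with rfl | hm
        · have hone : pL n z E (0 + 1) = 1 := pL_one n z E
          omega
        · obtain ⟨v, hv1, hv2, hv3, hv4⟩ := ih hm h
          exact ⟨v, hv1, by omega, hv3, hv4⟩
      · exact ⟨m + 1, by omega, le_rfl, h, hlt⟩
  have htop : i < pL n z E (n + 1) := by rw [pL_top]; omega
  exact key n hn htop

lemma nbr_mem {v j : ℕ} (hj : j < degPlus n E v) :
    v < (nbrList n E v).getD j 0 ∧ (nbrList n E v).getD j 0 ≤ n ∧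
      E v ((nbrList n E v).getD j 0) := by
  set u := (nbrList n E v).getD j 0 with hu
  have hlen : (nbrList n E v).length = degPlus n E v := by
    unfold nbrList degPlus; exact Finset.length_sort _
  have hjl : j < (nbrList n E v).length := by omega
  have hmem : u ∈ nbrList n E v := by
    rw [hu, List.getD_eq_get _ _ ⟨j, hjl⟩]
    exact List.get_mem _ _
  rw [nbrList, Finset.mem_sort] at hmem
  rw [Finset.mem_filter, Finset.mem_Icc] at hmem
  exact ⟨by omega, hmem.1.2, hmem.2⟩

lemma nbr_getD_inj {v j j' : ℕ} (hj : j < degPlus n E v) (hj' : j' < degPlus n E v)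
    (h : (nbrList n E v).getD j 0 = (nbrList n E v).getD j' 0) : j = j' := by
  have hlen : (nbrList n E v).length = degPlus n E v := by
    unfold nbrList degPlus; exact Finset.length_sort _
  have hjl : j < (nbrList n E v).length := by omega
  have hjl' : j' < (nbrList n E v).length := by omega
  rw [List.getD_eq_get _ _ ⟨j, hjl⟩, List.getD_eq_get _ _ ⟨j', hjl'⟩] at h
  have hs : (nbrList n E v).SortedLT := by
    unfold nbrList; exact Finset.sortedLT_sort _
  have := hs.strictMono_get.injective h
  simpa using congrArg Fin.val this

lemma ellE_strictmono {v v' u : ℕ} (h1 : 1 ≤ v) (hvv : v < v') (hE : E v u) :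
    ellE E v u < ellE E v' u := by
  apply Finset.card_lt_card
  have hsub : (Finset.Ico 1 v).filter (fun w => E w u) ⊆
      (Finset.Ico 1 v').filter (fun w => E w u) :=
    Finset.filter_subset_filter _ (Finset.Ico_subset_Ico le_rfl (le_of_lt hvv))
  rw [Finset.ssubset_iff_of_subset hsub]
  refine ⟨v, ?_, ?_⟩
  · rw [Finset.mem_filter, Finset.mem_Ico]; exact ⟨⟨h1, hvv⟩, hE⟩
  · rw [Finset.mem_filter, Finset.mem_Ico]; omega

lemma degMinus_eq_ellE (hsym : ∀ u v, E u v → E v u) {u : ℕ} (hu : 1 ≤ u) :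
    degMinus n E u = ellE E u u := by
  rw [degMinus, ellE]
  have hIcc : Finset.Icc 1 (u - 1) = Finset.Ico 1 u := by
    ext x; simp only [Finset.mem_Icc, Finset.mem_Ico]; omega
  rw [hIcc]
  congr 1
  apply Finset.filter_congr
  intro x _
  exact ⟨hsym u x, hsym x u⟩

lemma ellE_lt_degMinus (hsym : ∀ u v, E u v → E v u) {v u : ℕ}
    (h1 : 1 ≤ v) (hvu : v < u) (hE : E v u) :
    ellE E v u < degMinus n E u := by
  rw [degMinus_eq_ellE n E hsym (by omega)]
  exact ellE_strictmono E h1 hvu hE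

lemma enc_spec (hsym : ∀ u v, E u v → E v u) (hn : 1 ≤ n) {i : ℕ}
    (h1 : 1 ≤ i) (h2 : i ≤ 2 * z * n + edgeCount n E) :
    ∃ v, 1 ≤ v ∧ v ≤ n ∧
      qR n z E v < enc n z E i + z ∧ enc n z E i + z ≤ qR n z E (v + 1) ∧
      ((∃ j, j < z ∧ i = pL n z E v + j ∧ enc n z E i + j = qL n z E v ∧
          qR n z E v + degMinus n E v < enc n z E i)
       ∨ (∃ j, j < z ∧ i = pR n z E v + j ∧ enc n z E i + j = qR n z E v ∧
          enc n z E i ≤ qR n z E v)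
       ∨ (∃ w j, 1 ≤ w ∧ w < v ∧ j < degPlus n E w ∧ i = pM n z E w + j ∧
          (nbrList n E w).getD j 0 = v ∧ E w v ∧
          enc n z E i = qM n z E v + ellE E w v ∧
          qR n z E v < enc n z E i ∧ enc n z E i ≤ qR n z E v + degMinus n E v)) := by
  obtain ⟨v, hv1, hv2, hL, hU⟩ := exists_block n z E hn h1 h2
  have hvIcc : v ∈ Finset.Icc 1 n := Finset.mem_Icc.mpr ⟨hv1, hv2⟩
  have hsucc : pL n z E (v + 1) = pL n z E v + (2 * z + degPlus n E v) :=
    pL_succ n z E hv1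
  have hqsucc : qR n z E (v + 1) = qR n z E v + (2 * z + degMinus n E v) :=
    qR_succ n z E hv1
  have hzq : z ≤ qR n z E v := z_le_qR n z E v
  rcases Nat.lt_or_ge i (pM n z E v) with hiM | hiM
  · -- left run
    set j := i - pL n z E v with hjdef
    have hj : j < z := by unfold pM at hiM; omega
    have hieq : i = pL n z E v + j := by omega
    have henc : enc n z E i = qL n z E v - j := by
      rw [hieq]; exact enc_left n z E hvIcc hj
    have hqL : qL n z E v = qR n z E v + z + degMinus n E v := rfl
    refine ⟨v, hv1, hv2, by omega, by omega, Or.inl ⟨j, hj, hieq, by omega, by omega⟩⟩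
  · rcases Nat.lt_or_ge i (pR n z E v) with hiR | hiR
    · -- middle
      set j := i - pM n z E v with hjdef
      have hj : j < degPlus n E v := by unfold pR at hiR; omega
      have hieq : i = pM n z E v + j := by omega
      set u := (nbrList n E v).getD j 0 with hudef
      obtain ⟨huv, hun, hEvu⟩ := nbr_mem n E hj
      have henc : enc n z E i = qM n z E u + ellE E v u := by
        rw [hieq]; exact enc_mid n z E hvIcc hj
      have hell : ellE E v u < degMinus n E u := ellE_lt_degMinus n E hsym hv1 huv hEvu
      have hqM : qM n z E u = qR n z E u + 1 := rfl
      have hqsucc' : qR n z E (u + 1) = qR n z E u + (2 * z + degMinus n E u) :=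
        qR_succ n z E (by omega)
      exact ⟨u, by omega, hun, by omega, by omega,
        Or.inr (Or.inr ⟨v, j, hv1, huv, hj, hieq, rfl, hEvu, henc, by omega, by omega⟩)⟩
    · -- right run
      set j := i - pR n z E v with hjdef
      have hj : j < z := by
        have : pR n z E v + z = pL n z E (v + 1) := by
          rw [hsucc]; unfold pR pM; ring
        omega
      have hieq : i = pR n z E v + j := by omega
      have henc : enc n z E i = qR n z E v - j := by
        rw [hieq]; exact enc_right n z E hvIcc hj
      refine ⟨v, hv1, hv2, by omega, by omega, Or.inr (Or.inl ⟨j, hj, hieq, by omega, by omega⟩)⟩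

end EncBij

/-- For a graph  on vertex set  (given by a symmetric, irreflexive adjacency
relation supported on ) and any , the encoding map  is a
permutation of . -/
theorem enc_bijOn (n z : ℕ) (E : ℕ → ℕ → Prop)
    (hsym : ∀ u v, E u v → E v u)
    (hrange : ∀ u v, E u v → u ∈ Finset.Icc 1 n ∧ v ∈ Finset.Icc 1 n)
    (hirr : ∀ v, ¬ E v v) :
    Set.BijOn (enc n z E) (Set.Icc 1 (2 * z * n + edgeCount n E))
      (Set.Icc 1 (2 * z * n + edgeCount n E)) := by
  rcases Nat.eq_zero_or_pos n with rfl | hn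
  · have hE0 : edgeCount 0 E = 0 := by simp [edgeCount]
    have hzero : (2 * z * 0 + edgeCount 0 E) = 0 := by rw [hE0]; ring
    rw [hzero, show Set.Icc 1 0 = (∅ : Set ℕ) from Set.Icc_eq_empty (by omega)]
    exact Set.bijOn_empty _
  · set N := 2 * z * n + edgeCount n E with hNdef
    have hqtop : qR n z E (n + 1) = z + N := qR_top n z E hsym
    have hmaps : Set.MapsTo (enc n z E) (Set.Icc 1 N) (Set.Icc 1 N) := by
      intro i hi
      obtain ⟨hi1, hi2⟩ := hi
      obtain ⟨v, hv1, hv2, hb1, hb2, -⟩ := enc_spec n z E hsym hn hi1 hi2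
      have hmono := qR_mono n z E (show v + 1 ≤ n + 1 by omega)
      have hz := z_le_qR n z E v
      exact ⟨by omega, by omega⟩
    have hinj : Set.InjOn (enc n z E) (Set.Icc 1 N) := by
      intro i hi i' hi' heq
      obtain ⟨v, hv1, hv2, hb1, hb2, hcase⟩ := enc_spec n z E hsym hn hi.1 hi.2
      obtain ⟨v', hv1', hv2', hb1', hb2', hcase'⟩ :=
        enc_spec n z E hsym hn hi'.1 hi'.2
      rw [← heq] at hb1' hb2'
      have hvv : v = v' := qblock_unique n z E hv1 hv1' hb1 hb2 hb1' hb2'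
      subst hvv
      rcases hcase with ⟨j, hj, hieq, hval, hlb⟩ | ⟨j, hj, hieq, hval, hub⟩ |
          ⟨w, j, hw1, hwlt, hj, hieq, hget, hEwv, hval, hlb, hub⟩ <;>
        rcases hcase' with ⟨j', hj', hieq', hval', hlb'⟩ |
            ⟨j', hj', hieq', hval', hub'⟩ |
            ⟨w', j', hw1', hwlt', hj', hieq', hget', hEwv', hval', hlb', hub'⟩ <;>
        try omega
      -- remaining: middle/middle case
      have hell : ellE E w v = ellE E w' v := by omega
      have hww : w = w' := by
        rcases lt_trichotomy w w' with h | h | h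
        · exact absurd (ellE_strictmono E hw1 h hEwv) (by omega)
        · exact h
        · exact absurd (ellE_strictmono E hw1' h hEwv') (by omega)
      subst hww
      have hjj : j = j' := nbr_getD_inj n E hj hj' (hget.trans hget'.symm)
      omega
    exact ((Set.finite_Icc 1 N).injOn_iff_bijOn_of_mapsTo hmaps).mp hinj
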